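/- Let 0 < ρ̲ < ρ̄, C > 0, and let ρ = (ρ_i)_{i≥1} with ρ_i ∈ [ρ̲, ρ̄], ∑_j h_j < ∞, and m(ρ) := ∑_{i=0}^∞ (i − C) h_i = 0 (the series converging absolutely). Suppose there exists i ≥ 1 with ρ_i < ρ̄ and ρ_{i+1} > ρ̲. Then there exist ε, δ > 0 such that the perturbed sequence ρ̃ with ρ̃_j = ρ_j for j ∉ {i, i+1}, ρ̃_i = ρ_i + ε, and ρ̃_{i+1} = ρ_{i+1} − δ satisfies m(ρ̃) = 0 and f(ρ̃) > f(ρ), where f(ρ) := ∑_{j=0}^∞ h_j = 1/π_0. In particular ρ is not optimal for minimizing π_0 subject to ∑_i i π_i ≤ C. -/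

import Mathlib

/-- `hseq ρ i = ∏_{j=1}^i ρ_j`, with `hseq ρ 0 = 1`. -/
noncomputable def hseq (ρ : ℕ → ℝ) (i : ℕ) : ℝ := ∏ j ∈ Finset.Icc 1 i, ρ j

/-- The perturbed sequence: `ρ̃_i = ρ_i + ε`, `ρ̃_{i+1} = ρ_{i+1} - δ`, and
`ρ̃_j = ρ_j` otherwise. -/
noncomputable def pert (ρ : ℕ → ℝ) (i : ℕ) (ε δ : ℝ) (j : ℕ) : ℝ :=
  if j = i then ρ i + ε else if j = i + 1 then ρ (i + 1) - δ else ρ j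

lemma hseq_pos (ρ : ℕ → ℝ) (hρ : ∀ j, 1 ≤ j → 0 < ρ j) (j : ℕ) : 0 < hseq ρ j := by
  unfold hseq
  exact Finset.prod_pos fun k hk => hρ k (Finset.mem_Icc.1 hk).1

lemma hseq_pert_lt (ρ : ℕ → ℝ) (i : ℕ) (ε δ : ℝ) (j : ℕ) (hj : j < i) :
    hseq (pert ρ i ε δ) j = hseq ρ j := by
  unfold hseq
  refine Finset.prod_congr rfl fun k hk => ?_
  simp only [Finset.mem_Icc] at hk
  have h1 : k ≠ i := by omega
  have h2 : k ≠ i + 1 := by omega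
  simp [pert, h1, h2]

lemma hseq_pert_eq (ρ : ℕ → ℝ) (i : ℕ) (hi : 1 ≤ i) (ε δ a : ℝ)
    (ha : ρ i + ε = a * ρ i) :
    hseq (pert ρ i ε δ) i = a * hseq ρ i := by
  unfold hseq
  have hmem : i ∈ Finset.Icc 1 i := by simp [hi]
  rw [← Finset.mul_prod_erase _ _ hmem, ← Finset.mul_prod_erase _ ρ hmem]
  have he : ∏ k ∈ (Finset.Icc 1 i).erase i, pert ρ i ε δ k
      = ∏ k ∈ (Finset.Icc 1 i).erase i, ρ k := by
    refine Finset.prod_congr rfl fun k hk => ?_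
    simp only [Finset.mem_erase, Finset.mem_Icc] at hk
    have h2 : k ≠ i + 1 := by omega
    simp [pert, hk.1, h2]
  rw [he]
  have e1 : pert ρ i ε δ i = ρ i + ε := by simp [pert]
  rw [e1, ha]; ring

lemma hseq_pert_gt (ρ : ℕ → ℝ) (i : ℕ) (hi : 1 ≤ i) (ε δ c : ℝ)
    (hc : (ρ i + ε) * (ρ (i + 1) - δ) = c * (ρ i * ρ (i + 1)))
    (j : ℕ) (hj : i + 1 ≤ j) :
    hseq (pert ρ i ε δ) j = c * hseq ρ j := by
  unfold hseq
  have hmem1 : i ∈ Finset.Icc 1 j := by simp only [Finset.mem_Icc]; omega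
  have hmem2 : i + 1 ∈ (Finset.Icc 1 j).erase i := by
    simp only [Finset.mem_erase, Finset.mem_Icc]; omega
  rw [← Finset.mul_prod_erase _ _ hmem1, ← Finset.mul_prod_erase _ _ hmem2,
      ← Finset.mul_prod_erase _ ρ hmem1, ← Finset.mul_prod_erase _ ρ hmem2]
  have he : ∏ k ∈ ((Finset.Icc 1 j).erase i).erase (i + 1), pert ρ i ε δ k
      = ∏ k ∈ ((Finset.Icc 1 j).erase i).erase (i + 1), ρ k := by
    refine Finset.prod_congr rfl fun k hk => ?_
    simp only [Finset.mem_erase, Finset.mem_Icc] at hk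
    simp [pert, hk.1, hk.2.1]
  rw [he]
  have e1 : pert ρ i ε δ i = ρ i + ε := by simp [pert]
  have e2 : pert ρ i ε δ (i + 1) = ρ (i + 1) - δ := by
    have : i + 1 ≠ i := by omega
    simp [pert, this]
  rw [e1, e2, ← mul_assoc, ← mul_assoc, hc]; ring

set_option maxHeartbeats 1600000 in
/-- Let `ρ_i ∈ [ρ̲, ρ̄]`, `∑_j h_j < ∞`, and
`m(ρ) = ∑_i (i - C) h_i = 0` (a convergent, hence absolutely convergent,
series). Suppose `ρ_i < ρ̄` and `ρ_{i+1} > ρ̲` for some `i ≥ 1`. Then there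
are `ε, δ > 0` such that the perturbed sequence `ρ̃` (staying in `[ρ̲, ρ̄]`)
satisfies `m(ρ̃) = 0` and `f(ρ̃) > f(ρ)`, where `f(ρ) = ∑_j h_j = 1/π_0`.
In particular `ρ` is not optimal for minimizing `π_0` subject to
`∑_i i π_i ≤ C`. -/
theorem stmt6 (rlo rhi C : ℝ) (h0 : 0 < rlo) (hlt : rlo < rhi) (hC : 0 < C)
    (ρ : ℕ → ℝ) (hρ : ∀ j : ℕ, 1 ≤ j → ρ j ∈ Set.Icc rlo rhi)
    (hsum : Summable (hseq ρ))
    (hmsum : Summable (fun j : ℕ => ((j : ℝ) - C) * hseq ρ j))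
    (hm : (∑' j : ℕ, ((j : ℝ) - C) * hseq ρ j) = 0)
    (i : ℕ) (hi : 1 ≤ i) (hρi : ρ i < rhi) (hρi1 : rlo < ρ (i + 1)) :
    ∃ ε > 0, ∃ δ > 0,
      ρ i + ε ≤ rhi ∧ rlo ≤ ρ (i + 1) - δ ∧
      Summable (hseq (pert ρ i ε δ)) ∧
      Summable (fun j : ℕ => ((j : ℝ) - C) * hseq (pert ρ i ε δ) j) ∧
      (∑' j : ℕ, ((j : ℝ) - C) * hseq (pert ρ i ε δ) j) = 0 ∧
      (∑' j : ℕ, hseq ρ j) < ∑' j : ℕ, hseq (pert ρ i ε δ) j := by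
  have hρpos : ∀ j, 1 ≤ j → 0 < ρ j := fun j hj => lt_of_lt_of_le h0 (hρ j hj).1
  have hpos : ∀ j, 0 < hseq ρ j := hseq_pos ρ hρpos
  -- tail summability
  have hsumS : Summable (fun j : ℕ => hseq ρ (j + (i + 1))) :=
    (summable_nat_add_iff (f := hseq ρ) (i + 1)).2 hsum
  have hsumD : Summable (fun j : ℕ =>
      ((↑(j + (i + 1)) : ℝ) - C) * hseq ρ (j + (i + 1))) :=
    (summable_nat_add_iff (f := fun j : ℕ => ((j : ℝ) - C) * hseq ρ j) (i + 1)).2 hmsum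
  set S : ℝ := ∑' j : ℕ, hseq ρ (j + (i + 1)) with hSdef
  set Dt : ℝ := ∑' j : ℕ, ((↑(j + (i + 1)) : ℝ) - C) * hseq ρ (j + (i + 1)) with hDdef
  set A : ℝ := ∑ j ∈ Finset.range i, ((j : ℝ) - C) * hseq ρ j with hAdef
  set B : ℝ := ((i : ℝ) - C) * hseq ρ i with hBdef
  set P : ℝ := ∑ j ∈ Finset.range i, hseq ρ j with hPdef
  -- decomposition of the two series
  have hfdec : (∑' j : ℕ, hseq ρ j) = P + hseq ρ i + S := by
    rw [← Summable.sum_add_tsum_nat_add (i + 1) hsum, Finset.sum_range_succ]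
  have hABD : A + B + Dt = 0 := by
    have := Summable.sum_add_tsum_nat_add (f := fun j : ℕ => ((j : ℝ) - C) * hseq ρ j)
      (i + 1) hmsum
    rw [hm, Finset.sum_range_succ] at this
    rw [hAdef, hBdef, hDdef]; linarith
  have hSpos : 0 < S := Summable.tsum_pos hsumS (fun j => (hpos _).le) 0 (hpos _)
  -- A < 0 and Dt > 0
  have hkey : A < 0 ∧ 0 < Dt := by
    rcases le_or_gt C (i : ℝ) with hCi | hCi
    · have hDpos : 0 < Dt := by
        refine Summable.tsum_pos hsumD (fun j => ?_) 0 ?_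
        · have : (0:ℝ) ≤ (↑(j + (i + 1)) : ℝ) - C := by push_cast; linarith
          exact mul_nonneg this (hpos _).le
        · have : (0:ℝ) < (↑(0 + (i + 1)) : ℝ) - C := by push_cast; linarith
          exact mul_pos this (hpos _)
      have hBnn : 0 ≤ B := mul_nonneg (by linarith) (hpos _).le
      exact ⟨by linarith, hDpos⟩
    · have hAneg : A < 0 := by
        refine Finset.sum_neg (fun j hj => ?_) ⟨0, Finset.mem_range.2 (by omega)⟩
        have hji : (j : ℝ) < (i : ℝ) := by
          exact_mod_cast Finset.mem_range.1 hj
        exact mul_neg_of_neg_of_pos (by linarith) (hpos _)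
      have hBneg : B < 0 := mul_neg_of_neg_of_pos (by linarith) (hpos _)
      exact ⟨hAneg, by linarith⟩
  obtain ⟨hAneg, hDpos⟩ := hkey
  -- the crucial positivity: Dt * h_i - B * S > 0
  have hsum3 : Summable (fun j : ℕ => ((j : ℝ) + 1) * hseq ρ (j + (i + 1))) := by
    refine (hsumD.sub (hsumS.mul_left ((i : ℝ) - C))).congr fun j => ?_
    push_cast; ring
  have hDS : Dt - ((i : ℝ) - C) * S = ∑' j : ℕ, ((j : ℝ) + 1) * hseq ρ (j + (i + 1)) := by
    have e : ((i : ℝ) - C) * S = ∑' j : ℕ, ((i : ℝ) - C) * hseq ρ (j + (i + 1)) :=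
      (tsum_mul_left).symm
    rw [hDdef, e, ← Summable.tsum_sub hsumD (hsumS.mul_left _)]
    exact tsum_congr fun j => by push_cast; ring
  have hDSpos : 0 < Dt - ((i : ℝ) - C) * S := by
    rw [hDS]
    exact Summable.tsum_pos hsum3 (fun j => mul_nonneg (by positivity) (hpos _).le) 0
      (mul_pos (by norm_num) (hpos _))
  have key : 0 < Dt * hseq ρ i - B * S := by
    have := mul_pos (hpos i) hDSpos
    rw [hBdef]; nlinarith
  -- choose t
  have hρip : 0 < ρ i := hρpos i hi
  have hρi1p : 0 < ρ (i + 1) := hρpos (i + 1) (by omega)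
  have ht1 : 0 < (rhi - ρ i) / ρ i := div_pos (by linarith) hρip
  have ht2 : 0 < (ρ (i + 1) - rlo) * Dt / (ρ (i + 1) * (-A)) :=
    div_pos (mul_pos (by linarith) hDpos) (mul_pos hρi1p (by linarith))
  set t : ℝ := min ((rhi - ρ i) / ρ i) ((ρ (i + 1) - rlo) * Dt / (ρ (i + 1) * (-A)))
    with htdef
  have htpos : 0 < t := lt_min ht1 ht2
  have ht1' : t ≤ (rhi - ρ i) / ρ i := min_le_left _ _
  have ht2' : t ≤ (ρ (i + 1) - rlo) * Dt / (ρ (i + 1) * (-A)) := min_le_right _ _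
  set ε : ℝ := t * ρ i with hεdef
  set c : ℝ := 1 - t * B / Dt with hcdef
  set δ : ℝ := ρ (i + 1) * ((1 + t) - c) / (1 + t) with hδdef
  have hεpos : 0 < ε := mul_pos htpos hρip
  have hDne : Dt ≠ 0 := ne_of_gt hDpos
  have h1t : (0:ℝ) < 1 + t := by linarith
  have hac : (1 + t) - c = t * (-A) / Dt := by
    have hAeq : -A = B + Dt := by linarith
    rw [hcdef, hAeq]; field_simp; ring
  have hδpos : 0 < δ := by
    rw [hδdef, hac]
    have : 0 < t * (-A) / Dt := div_pos (mul_pos htpos (by linarith)) hDpos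
    positivity
  have hεbound : ρ i + ε ≤ rhi := by
    have := mul_le_mul_of_nonneg_right ht1' hρip.le
    rw [div_mul_cancel₀ _ (ne_of_gt hρip)] at this
    rw [hεdef]; linarith
  have hδbound : rlo ≤ ρ (i + 1) - δ := by
    have h1 : t * (ρ (i + 1) * (-A)) ≤ (ρ (i + 1) - rlo) * Dt := by
      exact (le_div_iff₀ (mul_pos hρi1p (by linarith))).1 ht2'
    have h2 : δ * (1 + t) * Dt = ρ (i + 1) * (t * (-A)) := by
      rw [hδdef, hac]; field_simp
    nlinarith [mul_pos hδpos (mul_pos htpos hDpos)]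
  -- multiplicative identity for the perturbation beyond i
  have hcmul : (ρ i + ε) * (ρ (i + 1) - δ) = c * (ρ i * ρ (i + 1)) := by
    rw [hεdef, hδdef]
    field_simp
    ring
  have ha : ρ i + ε = (1 + t) * ρ i := by rw [hεdef]; ring
  -- pointwise description of the perturbed hseq
  have hlt' : ∀ j, j < i → hseq (pert ρ i ε δ) j = hseq ρ j :=
    fun j hj => hseq_pert_lt ρ i ε δ j hj
  have heqi : hseq (pert ρ i ε δ) i = (1 + t) * hseq ρ i :=
    hseq_pert_eq ρ i hi ε δ (1 + t) ha
  have hgt : ∀ j : ℕ, hseq (pert ρ i ε δ) (j + (i + 1)) = c * hseq ρ (j + (i + 1)) :=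
    fun j => hseq_pert_gt ρ i hi ε δ c hcmul (j + (i + 1)) (by omega)
  -- summability of perturbed series
  have hsump : Summable (hseq (pert ρ i ε δ)) := by
    refine (summable_nat_add_iff (i + 1)).1 ?_
    exact (hsumS.mul_left c).congr fun j => (hgt j).symm
  have hmsump : Summable (fun j : ℕ => ((j : ℝ) - C) * hseq (pert ρ i ε δ) j) := by
    refine (summable_nat_add_iff (i + 1)).1 ?_
    refine (hsumD.mul_left c).congr fun j => ?_
    rw [hgt j]; ring
  -- tsum of perturbed series
  have hfp : (∑' j : ℕ, hseq (pert ρ i ε δ) j) = P + (1 + t) * hseq ρ i + c * S := by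
    rw [← Summable.sum_add_tsum_nat_add (i + 1) hsump, Finset.sum_range_succ]
    have e1 : ∑ j ∈ Finset.range i, hseq (pert ρ i ε δ) j = P :=
      Finset.sum_congr rfl fun j hj => hlt' j (Finset.mem_range.1 hj)
    have e2 : (∑' j : ℕ, hseq (pert ρ i ε δ) (j + (i + 1))) = c * S := by
      rw [hSdef, ← tsum_mul_left]
      exact tsum_congr hgt
    rw [e1, heqi, e2]
  have hmp : (∑' j : ℕ, ((j : ℝ) - C) * hseq (pert ρ i ε δ) j)
      = A + (1 + t) * B + c * Dt := by
    rw [← Summable.sum_add_tsum_nat_add (i + 1) hmsump, Finset.sum_range_succ]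
    have e1 : ∑ j ∈ Finset.range i, ((j : ℝ) - C) * hseq (pert ρ i ε δ) j = A :=
      Finset.sum_congr rfl fun j hj => by rw [hlt' j (Finset.mem_range.1 hj)]
    have e2 : (∑' j : ℕ, ((↑(j + (i + 1)) : ℝ) - C) * hseq (pert ρ i ε δ) (j + (i + 1)))
        = c * Dt := by
      rw [hDdef, ← tsum_mul_left]
      exact tsum_congr fun j => by rw [hgt j]; ring
    rw [e1, heqi, e2, hBdef]; ring
  refine ⟨ε, hεpos, δ, hδpos, hεbound, hδbound, hsump, hmsump, ?_, ?_⟩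
  · rw [hmp]
    have hcDt : c * Dt = Dt - t * B := by rw [hcdef]; field_simp
    linarith [hABD]
  · rw [hfdec, hfp]
    have e : t * hseq ρ i + (c - 1) * S = t * (Dt * hseq ρ i - B * S) / Dt := by
      rw [hcdef]; field_simp; ring
    have hp : 0 < t * hseq ρ i + (c - 1) * S := by
      rw [e]; exact div_pos (mul_pos htpos key) hDpos
    linarith
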